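/- arXiv:1606.08325 — 2 statements merged into one kernel-verified Lean document; each statement's English description precedes it below -/
import Mathlib

section
/- Let n ∈ ℕ, r ∈ ℕ with r ≥ 1, let g₁,…,g_r : ℝ → ℝ be n times differentiable at a point x ∈ ℝ with g₁(x)+⋯+g_r(x) = 0, and define G : ℝ^r → ℝ by G(x₁,…,x_r) = (g₁(x₁)+⋯+g_r(x_r))^n. Then for every multi-index s = (s₁,…,s_r) of nonnegative integers with s₁+⋯+s_r < n, the mixed partial derivative ∂^{|s|} G / (∂x₁^{s₁} ⋯ ∂x_r^{s_r}) evaluated at the diagonal point (x,…,x) equals 0, and for every such multi-index with s₁+⋯+s_r = n it equals n! · Π_{i=1}^r (g_i'(x))^{s_i}. -/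
open scoped BigOperators

/-- The partial derivative of a function `G : ℝ^r → ℝ` in the `i`-th coordinate. -/
noncomputable def partialDeriv1 {r : ℕ} (i : Fin r) (G : (Fin r → ℝ) → ℝ) :
    (Fin r → ℝ) → ℝ :=
  fun y => deriv (fun t => G (Function.update y i t)) (y i)

/-- The iterated mixed partial derivative `∂^{|s|} / (∂x₁^{s₁} ⋯ ∂x_r^{s_r})`,
taking `s i` derivatives in the `i`-th coordinate. -/
noncomputable def mixedPartialDeriv {r : ℕ} (s : Fin r → ℕ) (G : (Fin r → ℝ) → ℝ) :
    (Fin r → ℝ) → ℝ :=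
  (List.finRange r).foldr (fun i H => (partialDeriv1 i)^[s i] H) G


open Function

lemma iterDeriv_hasDerivAt {n : ℕ} {f : ℝ → ℝ} {U : Set ℝ} (hU : IsOpen U)
    (hf : ContDiffOn ℝ (n : ℕ∞) f U) {t : ℝ} (ht : t ∈ U) {j : ℕ} (hj : j < n) :
    HasDerivAt (iteratedDeriv j f) (iteratedDeriv (j + 1) f t) t := by
  have hud : UniqueDiffOn ℝ U := hU.uniqueDiffOn
  have hdw : DifferentiableWithinAt ℝ (iteratedDerivWithin j f U) U t := by
    refine (hf.differentiableOn_iteratedDerivWithin ?_ hud) t ht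
    exact_mod_cast hj
  have heq : ∀ m : ℕ, Set.EqOn (iteratedDerivWithin m f U) (iteratedDeriv m f) U := by
    intro m s hs
    simp only [iteratedDerivWithin, iteratedDeriv, iteratedFDerivWithin_of_isOpen m hU hs]
  have heq' : iteratedDerivWithin j f U =ᶠ[nhds t] iteratedDeriv j f :=
    Filter.eventuallyEq_of_mem (hU.mem_nhds ht) (heq j)
  have hda : DifferentiableAt ℝ (iteratedDeriv j f) t := by
    have := (hdw.differentiableAt (hU.mem_nhds ht))
    exact this.congr_of_eventuallyEq heq'.symm
  have h2 := hda.hasDerivAt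
  rwa [show iteratedDeriv (j+1) f t = deriv (iteratedDeriv j f) t by
    rw [iteratedDeriv_succ]]

open Function

def bumps : List ℕ → List (List ℕ)
  | [] => []
  | j :: L => ((j + 1) :: L) :: (bumps L).map (j :: ·)

lemma bumps_mem {L L' : List ℕ} (h : L' ∈ bumps L) :
    ∀ j' ∈ L', ∃ j ∈ L, j' = j ∨ j' = j + 1 := by
  induction L generalizing L' with
  | nil => simp [bumps] at h
  | cons j L ih =>
    simp only [bumps, List.mem_cons, List.mem_map] at h
    rcases h with rfl | ⟨L'', hL'', rfl⟩
    · intro j' hj'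
      rcases List.mem_cons.1 hj' with rfl | hj'
      · exact ⟨j, by simp, Or.inr rfl⟩
      · exact ⟨j', by simp [hj'], Or.inl rfl⟩
    · intro j' hj'
      rcases List.mem_cons.1 hj' with rfl | hj'
      · exact ⟨j', by simp, Or.inl rfl⟩
      · obtain ⟨j₀, hj₀, hc⟩ := ih hL'' j' hj'
        exact ⟨j₀, by simp [hj₀], hc⟩

lemma prodList_hasDerivAt {n : ℕ} {f : ℝ → ℝ} {U : Set ℝ} (hU : IsOpen U)
    (hf : ContDiffOn ℝ (n : ℕ∞) f U) {t : ℝ} (ht : t ∈ U)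
    (L : List ℕ) (hL : ∀ j ∈ L, j < n) :
    HasDerivAt (fun t => (L.map (fun j => iteratedDeriv j f t)).prod)
      (((bumps L).map (fun L' => (L'.map (fun j => iteratedDeriv j f t)).prod)).sum) t := by
  induction L with
  | nil => simpa [bumps] using hasDerivAt_const t (1 : ℝ)
  | cons j L ih =>
    have h1 : HasDerivAt (iteratedDeriv j f) (iteratedDeriv (j + 1) f t) t :=
      iterDeriv_hasDerivAt hU hf ht (hL j (by simp))
    have h2 := ih (fun j hj => hL j (by simp [hj]))
    have h3 := h1.mul h2
    have hfun : (fun t => ((j :: L).map (fun j => iteratedDeriv j f t)).prod)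
        = fun t => iteratedDeriv j f t * (L.map (fun j => iteratedDeriv j f t)).prod := by
      funext t; simp
    rw [hfun]
    refine h3.congr_deriv (Eq.symm ?_)
    simp only [bumps, List.map_cons, List.prod_cons, List.sum_cons, List.map_map]
    rw [show ((bumps L).map ((fun L' => (L'.map (fun j' => iteratedDeriv j' f t)).prod) ∘ (j :: ·)))
        = (bumps L).map (fun L' => iteratedDeriv j f t * (L'.map (fun j' => iteratedDeriv j' f t)).prod) by
      apply List.map_congr_left; intro a _; simp]
    rw [List.sum_map_mul_left]
noncomputable def termFun {r : ℕ} (g : Fin r → ℝ → ℝ) (c : ℝ) (e : ℕ)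
    (m : Fin r → List ℕ) : (Fin r → ℝ) → ℝ :=
  fun y => c * (∑ i, g i (y i)) ^ e *
    ∏ i, ((m i).map (fun j => iteratedDeriv j (g i) (y i))).prod

inductive Nice (n : ℕ) {r : ℕ} (g : Fin r → ℝ → ℝ) (k : ℕ) : ((Fin r → ℝ) → ℝ) → Prop
  | zero : Nice n g k (fun _ => (0 : ℝ))
  | add {H₁ H₂} : Nice n g k H₁ → Nice n g k H₂ → Nice n g k (fun y => H₁ y + H₂ y)
  | term (c : ℝ) (e : ℕ) (m : Fin r → List ℕ) (he : n - k < e)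
      (hm : ∀ i, ∀ j ∈ m i, 1 ≤ j ∧ j ≤ k) : Nice n g k (termFun g c e m)

lemma Nice.mono {n r : ℕ} {g : Fin r → ℝ → ℝ} {k k' : ℕ} {H} (h : Nice n g k H)
    (hk : k ≤ k') : Nice n g k' H := by
  induction h with
  | zero => exact Nice.zero
  | add _ _ ih₁ ih₂ => exact Nice.add ih₁ ih₂
  | term c e m he hm =>
    exact Nice.term c e m (lt_of_le_of_lt (Nat.sub_le_sub_left hk n) he)
      (fun i j hj => ⟨(hm i j hj).1, le_trans (hm i j hj).2 hk⟩)

lemma Nice.eval_zero {n r : ℕ} {g : Fin r → ℝ → ℝ} {k : ℕ} {H} {x : ℝ}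
    (h : Nice n g k H) (hx : ∑ i, g i x = 0) : H (fun _ => x) = 0 := by
  induction h with
  | zero => rfl
  | add _ _ ih₁ ih₂ => simp [ih₁, ih₂]
  | term c e m he hm =>
    have he' : e ≠ 0 := by omega
    simp [termFun, hx, zero_pow he']

lemma Nice.listSum {n r : ℕ} {g : Fin r → ℝ → ℝ} {k : ℕ} {α : Type*} (l : List α)
    (F : α → (Fin r → ℝ) → ℝ) (h : ∀ a ∈ l, Nice n g k (F a)) :
    Nice n g k (fun y => (l.map (fun a => F a y)).sum) := by
  induction l with
  | nil => simpa using Nice.zero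
  | cons a l ih =>
    have : (fun y => ((a :: l).map (fun a => F a y)).sum)
        = fun y => F a y + (l.map (fun a => F a y)).sum := by funext y; simp
    rw [this]
    exact Nice.add (h a (by simp)) (ih (fun b hb => h b (by simp [hb])))

lemma prod_apply_update {r : ℕ} {β : Sort*} [DecidableEq (Fin r)] (Φ : Fin r → β → ℝ)
    (m : Fin r → β) (i : Fin r) (b : β) :
    ∏ l, Φ l (Function.update m i b l)
      = Φ i b * ∏ l ∈ Finset.univ.erase i, Φ l (m l) := by
  rw [show (fun l => Φ l (Function.update m i b l))
      = Function.update (fun l => Φ l (m l)) i (Φ i b) from funext (Function.apply_update Φ m i b)]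
  rw [Finset.prod_update_of_mem (Finset.mem_univ i), Finset.erase_eq]

lemma sum_apply_update {r : ℕ} {β : Sort*} [DecidableEq (Fin r)] (Φ : Fin r → β → ℝ)
    (m : Fin r → β) (i : Fin r) (b : β) :
    ∑ l, Φ l (Function.update m i b l)
      = Φ i b + ∑ l ∈ Finset.univ.erase i, Φ l (m l) := by
  rw [show (fun l => Φ l (Function.update m i b l))
      = Function.update (fun l => Φ l (m l)) i (Φ i b) from funext (Function.apply_update Φ m i b)]
  rw [Finset.sum_update_of_mem (Finset.mem_univ i), Finset.erase_eq]

lemma sum_update_nat {r : ℕ} (s : Fin r → ℕ) (i : Fin r) (v : ℕ) :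
    ∑ l, Function.update s i v l = (∑ l, s l) - s i + v := by
  have h1 : ∑ l, Function.update s i v l = v + ∑ l ∈ Finset.univ.erase i, s l := by
    rw [Finset.sum_update_of_mem (Finset.mem_univ i), Finset.erase_eq]
  have h2 : s i + ∑ l ∈ Finset.univ.erase i, s l = ∑ l, s l :=
    Finset.add_sum_erase _ s (Finset.mem_univ i)
  omega
def cube {r : ℕ} (U : Set ℝ) : Set (Fin r → ℝ) := {y | ∀ i, y i ∈ U}

lemma term_hasDerivAt {n r : ℕ} {g : Fin r → ℝ → ℝ} {U : Set ℝ} (hU : IsOpen U)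
    (hg : ∀ i, ContDiffOn ℝ (n : ℕ∞) (g i) U) {k : ℕ} (hkn : k + 1 ≤ n)
    (c : ℝ) (e : ℕ) (m : Fin r → List ℕ) (hm : ∀ i, ∀ j ∈ m i, 1 ≤ j ∧ j ≤ k)
    (i : Fin r) {y : Fin r → ℝ} (hy : y ∈ cube U) :
    HasDerivAt (fun t => termFun g c e m (Function.update y i t))
      (termFun g (c * e) (e - 1) (Function.update m i (1 :: m i)) y
        + ((bumps (m i)).map (fun L' => termFun g c e (Function.update m i L') y)).sum)
      (y i) := by
  have hyi : y i ∈ U := hy i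
  set C : ℝ := ∑ l ∈ Finset.univ.erase i, g l (y l) with hC
  set D : ℝ := ∏ l ∈ Finset.univ.erase i,
    ((m l).map (fun j => iteratedDeriv j (g l) (y l))).prod with hD
  set Q : ℝ → ℝ := fun t => ((m i).map (fun j => iteratedDeriv j (g i) t)).prod with hQdef
  have hsum : ∀ t : ℝ, (∑ l, g l (Function.update y i t l)) = g i t + C :=
    fun t => sum_apply_update (fun l a => g l a) y i t
  have hprod : ∀ t : ℝ,
      (∏ l, ((m l).map (fun j => iteratedDeriv j (g l) (Function.update y i t l))).prod)
        = Q t * D :=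
    fun t => prod_apply_update (fun l a => ((m l).map (fun j => iteratedDeriv j (g l) a)).prod) y i t
  have hfy : (∑ l, g l (y l)) = g i (y i) + C := by
    have h := hsum (y i)
    rwa [Function.update_eq_self i y] at h
  have hfun : (fun t => termFun g c e m (Function.update y i t))
      = fun t => (c * (g i t + C) ^ e) * (Q t * D) := by
    funext t; rw [termFun, hsum t, hprod t]
  rw [hfun]
  have hg1 : HasDerivAt (g i) (iteratedDeriv 1 (g i) (y i)) (y i) := by
    have h := iterDeriv_hasDerivAt hU (hg i) hyi (show 0 < n by omega)
    simpa [iteratedDeriv_zero] using h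
  have hpow : HasDerivAt (fun t => c * (g i t + C) ^ e)
      (c * ((e : ℝ) * (g i (y i) + C) ^ (e - 1) * iteratedDeriv 1 (g i) (y i))) (y i) :=
    ((hg1.add_const C).pow e).const_mul c
  set S : ℝ := ((bumps (m i)).map
    (fun L' => (L'.map (fun j => iteratedDeriv j (g i) (y i))).prod)).sum with hS
  have hQ' : HasDerivAt Q S (y i) :=
    prodList_hasDerivAt hU (hg i) hyi (m i) (fun j hj => by have := hm i j hj; omega)
  have h3 := hpow.mul (hQ'.mul_const D)
  refine h3.congr_deriv (Eq.symm ?_)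
  have hmain : termFun g (c * e) (e - 1) (Function.update m i (1 :: m i)) y
      = (c * e) * (g i (y i) + C) ^ (e - 1)
        * ((iteratedDeriv 1 (g i) (y i) * Q (y i)) * D) := by
    rw [termFun, hfy,
      prod_apply_update (fun l L => (L.map (fun j => iteratedDeriv j (g l) (y l))).prod) m i
        (1 :: m i)]
    simp only [List.map_cons, List.prod_cons]
    rfl
  have hrest : ((bumps (m i)).map (fun L' => termFun g c e (Function.update m i L') y)).sum
      = (c * (g i (y i) + C) ^ e * D) * S := by
    rw [show ((bumps (m i)).map (fun L' => termFun g c e (Function.update m i L') y))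
        = (bumps (m i)).map (fun L' => (c * (g i (y i) + C) ^ e * D)
            * (L'.map (fun j => iteratedDeriv j (g i) (y i))).prod) from
      List.map_congr_left (fun L' _ => by
        rw [termFun, hfy,
          prod_apply_update (fun l L => (L.map (fun j => iteratedDeriv j (g l) (y l))).prod) m i L']
        ring)]
    rw [List.sum_map_mul_left]
  rw [hmain, hrest]
  ring
lemma Nice.hasDeriv {n r : ℕ} {g : Fin r → ℝ → ℝ} {U : Set ℝ} (hU : IsOpen U)
    (hg : ∀ i, ContDiffOn ℝ (n : ℕ∞) (g i) U) {k : ℕ} (hkn : k + 1 ≤ n)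
    {H : (Fin r → ℝ) → ℝ} (h : Nice n g k H) (i : Fin r) :
    ∃ H', Nice n g (k + 1) H' ∧
      ∀ y ∈ cube U, HasDerivAt (fun t => H (Function.update y i t)) (H' y) (y i) := by
  induction h with
  | zero =>
    exact ⟨fun _ => 0, Nice.zero, fun y _ => hasDerivAt_const (y i) 0⟩
  | @add H₁ H₂ h₁ h₂ ih₁ ih₂ =>
    obtain ⟨G₁, hG₁, hd₁⟩ := ih₁
    obtain ⟨G₂, hG₂, hd₂⟩ := ih₂
    exact ⟨fun y => G₁ y + G₂ y, Nice.add hG₁ hG₂, fun y hy => (hd₁ y hy).add (hd₂ y hy)⟩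
  | term c e m he hm =>
    refine ⟨fun y => termFun g (c * e) (e - 1) (Function.update m i (1 :: m i)) y
        + ((bumps (m i)).map (fun L' => termFun g c e (Function.update m i L') y)).sum,
      ?_, fun y hy => term_hasDerivAt hU hg hkn c e m hm i hy⟩
    refine Nice.add ?_ ?_
    · refine Nice.term _ _ _ (by omega) ?_
      intro l j hj
      rcases eq_or_ne l i with rfl | hne
      · rw [Function.update_self] at hj
        rcases List.mem_cons.1 hj with rfl | hj
        · omega
        · have := hm l j hj; omega
      · rw [Function.update_of_ne hne] at hj
        have := hm l j hj; omega
    · refine Nice.listSum _ _ (fun L' hL' => ?_)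
      refine Nice.term _ _ _ (by omega) ?_
      intro l j hj
      rcases eq_or_ne l i with rfl | hne
      · rw [Function.update_self] at hj
        obtain ⟨j₀, hj₀, hc⟩ := bumps_mem hL' j hj
        have := hm l j₀ hj₀; omega
      · rw [Function.update_of_ne hne] at hj
        have := hm l j hj; omega

noncomputable def mainFun (n : ℕ) {r : ℕ} (g : Fin r → ℝ → ℝ) (s : Fin r → ℕ) :
    (Fin r → ℝ) → ℝ :=
  fun y => (n.descFactorial (∑ l, s l) : ℝ) * (∑ l, g l (y l)) ^ (n - ∑ l, s l)
    * ∏ l, (deriv (g l) (y l)) ^ (s l)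
lemma sum_update_add {r : ℕ} (s : Fin r → ℕ) (i : Fin r) (m : ℕ) :
    ∑ l, Function.update s i (s i + m) l = (∑ l, s l) + m := by
  rw [sum_update_nat]
  have h : s i ≤ ∑ l, s l :=
    Finset.single_le_sum (f := s) (fun _ _ => Nat.zero_le _) (Finset.mem_univ i)
  omega

lemma main_step {n r : ℕ} {g : Fin r → ℝ → ℝ} {U : Set ℝ} (hU : IsOpen U)
    (hg : ∀ i, ContDiffOn ℝ (n : ℕ∞) (g i) U) (s : Fin r → ℕ)
    (hkn : (∑ l, s l) + 1 ≤ n) (i : Fin r) :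
    ∃ H', Nice n g ((∑ l, s l) + 1) H' ∧ ∀ y ∈ cube U,
      HasDerivAt (fun t => mainFun n g s (Function.update y i t))
        (mainFun n g (Function.update s i (s i + 1)) y + H' y) (y i) := by
  set k := ∑ l, s l with hk
  set A : ℝ := (n.descFactorial k : ℝ) with hA
  have hsumup : ∑ l, Function.update s i (s i + 1) l = k + 1 := sum_update_add s i 1
  have hsub : n - (k + 1) = n - k - 1 := by omega
  have hdF : (n.descFactorial (k + 1) : ℝ) = ((n - k : ℕ) : ℝ) * A := by
    rw [hA, Nat.descFactorial_succ]; push_cast; ring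
  rcases Nat.eq_zero_or_pos (s i) with hsi | hsi
  · -- case s i = 0
    refine ⟨fun _ => 0, Nice.zero, fun y hy => ?_⟩
    have hyi : y i ∈ U := hy i
    set C : ℝ := ∑ l ∈ Finset.univ.erase i, g l (y l) with hC
    set D' : ℝ := ∏ l ∈ Finset.univ.erase i, (deriv (g l) (y l)) ^ (s l) with hD'
    have hsum : ∀ t : ℝ, (∑ l, g l (Function.update y i t l)) = g i t + C :=
      fun t => sum_apply_update (fun l a => g l a) y i t
    have hfy : (∑ l, g l (y l)) = g i (y i) + C := by
      have h := hsum (y i); rwa [Function.update_eq_self i y] at h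
    have hP0 : ∀ t : ℝ, (∏ l, (deriv (g l) (Function.update y i t l)) ^ (s l)) = D' := by
      intro t
      rw [prod_apply_update (fun l a => (deriv (g l) a) ^ (s l)) y i t, hsi]
      simp
      rfl
    have hfun : (fun t => mainFun n g s (Function.update y i t))
        = fun t => (A * (g i t + C) ^ (n - k)) * D' := by
      funext t; rw [mainFun, hsum t, hP0 t]
    rw [hfun]
    have hg1 : HasDerivAt (g i) (iteratedDeriv 1 (g i) (y i)) (y i) := by
      have h := iterDeriv_hasDerivAt hU (hg i) hyi (show 0 < n by omega)
      simpa [iteratedDeriv_zero] using h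
    have h3 := (((hg1.add_const C).pow (n - k)).const_mul A).mul_const D'
    refine h3.congr_deriv (Eq.symm ?_)
    rw [mainFun, hsumup, hfy,
      prod_apply_update (fun l e => (deriv (g l) (y l)) ^ e) s i (s i + 1), hdF, hsub, hsi,
      iteratedDeriv_one]
    simp only [pow_one, zero_add, pow_zero]
    ring
  · -- case s i ≥ 1
    have hki : s i ≤ k :=
      Finset.single_le_sum (f := s) (fun _ _ => Nat.zero_le _) (Finset.mem_univ i)
    set m' : Fin r → List ℕ :=
      Function.update (fun l => List.replicate (s l) 1) i
        (2 :: List.replicate (s i - 1) 1) with hm'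
    refine ⟨termFun g (A * (s i : ℝ)) (n - k) m', ?_, fun y hy => ?_⟩
    · refine Nice.term _ _ _ (by omega) ?_
      intro l j hj
      rcases eq_or_ne l i with rfl | hne
      · rw [hm', Function.update_self] at hj
        rcases List.mem_cons.1 hj with rfl | hj
        · omega
        · rw [List.mem_replicate] at hj; omega
      · rw [hm', Function.update_of_ne hne, List.mem_replicate] at hj
        omega
    · have hyi : y i ∈ U := hy i
      set C : ℝ := ∑ l ∈ Finset.univ.erase i, g l (y l) with hC
      set D' : ℝ := ∏ l ∈ Finset.univ.erase i, (deriv (g l) (y l)) ^ (s l) with hD'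
      have hsum : ∀ t : ℝ, (∑ l, g l (Function.update y i t l)) = g i t + C :=
        fun t => sum_apply_update (fun l a => g l a) y i t
      have hfy : (∑ l, g l (y l)) = g i (y i) + C := by
        have h := hsum (y i); rwa [Function.update_eq_self i y] at h
      have hPt : ∀ t : ℝ, (∏ l, (deriv (g l) (Function.update y i t l)) ^ (s l))
          = (deriv (g i) t) ^ (s i) * D' :=
        fun t => prod_apply_update (fun l a => (deriv (g l) a) ^ (s l)) y i t
      have hfun : (fun t => mainFun n g s (Function.update y i t))
          = fun t => (A * (g i t + C) ^ (n - k)) * ((deriv (g i) t) ^ (s i) * D') := by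
        funext t; rw [mainFun, hsum t, hPt t]
      rw [hfun]
      have hg1 : HasDerivAt (g i) (iteratedDeriv 1 (g i) (y i)) (y i) := by
        have h := iterDeriv_hasDerivAt hU (hg i) hyi (show 0 < n by omega)
        simpa [iteratedDeriv_zero] using h
      have hg2 : HasDerivAt (deriv (g i)) (iteratedDeriv 2 (g i) (y i)) (y i) := by
        have h := iterDeriv_hasDerivAt hU (hg i) hyi (show 1 < n by omega)
        rwa [iteratedDeriv_one] at h
      have hP := hg2.pow (s i)
      have h3 := (((hg1.add_const C).pow (n - k)).const_mul A).mul (hP.mul_const D')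
      refine h3.congr_deriv (Eq.symm ?_)
      have hmain : mainFun n g (Function.update s i (s i + 1)) y
          = ((n - k : ℕ) : ℝ) * A * (g i (y i) + C) ^ (n - k - 1)
            * ((deriv (g i) (y i)) ^ (s i + 1) * D') := by
        rw [mainFun, hsumup, hfy,
          prod_apply_update (fun l e => (deriv (g l) (y l)) ^ e) s i (s i + 1), hdF, hsub]
      have hterm : termFun g (A * (s i : ℝ)) (n - k) m' y
          = (A * (s i : ℝ)) * (g i (y i) + C) ^ (n - k)
            * ((iteratedDeriv 2 (g i) (y i) * (deriv (g i) (y i)) ^ (s i - 1)) * D') := by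
        rw [termFun, hfy, hm',
          prod_apply_update (fun l L => (L.map (fun j => iteratedDeriv j (g l) (y l))).prod)
            (fun l => List.replicate (s l) 1) i (2 :: List.replicate (s i - 1) 1)]
        simp only [List.map_cons, List.prod_cons, List.map_replicate, List.prod_replicate,
          iteratedDeriv_one]
        rfl
      rw [hmain, hterm, iteratedDeriv_one]
      have hpow' : (deriv (g i) (y i)) ^ (s i + 1)
          = deriv (g i) (y i) * (deriv (g i) (y i)) ^ (s i) := by ring
      have hpow'' : (deriv (g i) (y i)) ^ (s i)
          = deriv (g i) (y i) ^ (s i - 1) * deriv (g i) (y i) := by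
        rw [← pow_succ]; congr 1; omega
      simp only [Pi.pow_apply]
      rw [hpow', hpow'']
      ring
def PP (n : ℕ) {r : ℕ} (g : Fin r → ℝ → ℝ) (U : Set ℝ) (s : Fin r → ℕ)
    (H : (Fin r → ℝ) → ℝ) : Prop :=
  ∃ H', Nice n g (∑ l, s l) H' ∧ ∀ y ∈ cube U, H y = mainFun n g s y + H' y

lemma stepP {n r : ℕ} {g : Fin r → ℝ → ℝ} {U : Set ℝ} (hU : IsOpen U)
    (hg : ∀ i, ContDiffOn ℝ (n : ℕ∞) (g i) U) {s : Fin r → ℕ} {H : (Fin r → ℝ) → ℝ}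
    (h : PP n g U s H) (i : Fin r) (hkn : (∑ l, s l) + 1 ≤ n) :
    PP n g U (Function.update s i (s i + 1)) (partialDeriv1 i H) := by
  obtain ⟨H', hN, hEq⟩ := h
  obtain ⟨H₁, hN₁, hd₁⟩ := main_step hU hg s hkn i
  obtain ⟨H₂, hN₂, hd₂⟩ := Nice.hasDeriv hU hg hkn hN i
  refine ⟨fun y => H₁ y + H₂ y, ?_, ?_⟩
  · rw [sum_update_add]; exact Nice.add hN₁ hN₂
  · intro y hy
    have hev : (fun t => mainFun n g s (Function.update y i t) + H' (Function.update y i t))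
        =ᶠ[nhds (y i)] (fun t => H (Function.update y i t)) := by
      filter_upwards [hU.mem_nhds (hy i)] with t ht
      refine (hEq _ ?_).symm
      intro l
      rcases eq_or_ne l i with rfl | hne
      · rwa [Function.update_self]
      · rw [Function.update_of_ne hne]; exact hy l
    have hD : HasDerivAt (fun t => H (Function.update y i t))
        (mainFun n g (Function.update s i (s i + 1)) y + (H₁ y + H₂ y)) (y i) := by
      have h2 := ((hd₁ y hy).add (hd₂ y hy)).congr_of_eventuallyEq hev.symm
      refine h2.congr_deriv (Eq.symm ?_)
      ring
    exact hD.deriv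

lemma iterP {n r : ℕ} {g : Fin r → ℝ → ℝ} {U : Set ℝ} (hU : IsOpen U)
    (hg : ∀ i, ContDiffOn ℝ (n : ℕ∞) (g i) U) (s : Fin r → ℕ) (i : Fin r)
    {H : (Fin r → ℝ) → ℝ} (h : PP n g U s H) :
    ∀ m : ℕ, (∑ l, s l) + m ≤ n →
      PP n g U (Function.update s i (s i + m)) ((partialDeriv1 i)^[m] H) := by
  intro m
  induction m with
  | zero =>
    intro _
    simpa [Function.update_eq_self] using h
  | succ m ih =>
    intro hmn
    have h1 := ih (by omega)
    have h2 := stepP hU hg h1 i (by rw [sum_update_add]; omega)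
    rw [Function.iterate_succ_apply']
    have hidx : Function.update (Function.update s i (s i + m)) i
        (Function.update s i (s i + m) i + 1) = Function.update s i (s i + (m + 1)) := by
      rw [Function.update_self, Function.update_idem, Nat.add_assoc]
    rwa [hidx] at h2

lemma foldP {n r : ℕ} {g : Fin r → ℝ → ℝ} {U : Set ℝ} (hU : IsOpen U)
    (hg : ∀ i, ContDiffOn ℝ (n : ℕ∞) (g i) U) {G : (Fin r → ℝ) → ℝ}
    (hG : G = fun y => (∑ i, g i (y i)) ^ n) (s : Fin r → ℕ) (hs : ∑ l, s l ≤ n) :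
    ∀ L : List (Fin r), L.Nodup →
      PP n g U (fun j => if j ∈ L then s j else 0)
        (L.foldr (fun i H => (partialDeriv1 i)^[s i] H) G) := by
  intro L hL
  induction L with
  | nil =>
    simp only [List.not_mem_nil, if_false, List.foldr_nil]
    refine ⟨fun _ => 0, by simpa using (Nice.zero : Nice n g 0 _), fun y hy => ?_⟩
    simp [mainFun, hG]
  | cons i L ih =>
    have hiL : i ∉ L := (List.nodup_cons.1 hL).1
    have h1 := ih (List.nodup_cons.1 hL).2
    set t' : Fin r → ℕ := fun j => if j ∈ L then s j else 0 with ht'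
    have ht'i : t' i = 0 := by simp [ht', hiL]
    have hmono : ∀ j, Function.update t' i (t' i + s i) j ≤ s j := by
      intro j
      rcases eq_or_ne j i with rfl | hne
      · rw [Function.update_self, ht'i]; omega
      · rw [Function.update_of_ne hne, ht']
        simp only []
        split <;> omega
    have hsumle : (∑ l, t' l) + s i ≤ n := by
      have h3 := sum_update_add t' i (s i)
      have hle : ∑ l, Function.update t' i (t' i + s i) l ≤ ∑ l, s l :=
        Finset.sum_le_sum (fun j _ => hmono j)
      omega
    have h2 := iterP hU hg t' i h1 (s i) hsumle
    rw [List.foldr_cons]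
    have hidx : Function.update t' i (t' i + s i) = fun j => if j ∈ i :: L then s j else 0 := by
      funext j
      rcases eq_or_ne j i with rfl | hne
      · simp [Function.update_self, ht'i, hiL]
      · rw [Function.update_of_ne hne, ht']
        simp [List.mem_cons, hne]
    rwa [hidx] at h2
theorem stmt_13 (n r : ℕ) (hr : 1 ≤ r)
    (g : Fin r → ℝ → ℝ) (x : ℝ)
    (hg : ∀ i, ContDiffAt ℝ (n : ℕ∞) (g i) x)
    (hsum : ∑ i, g i x = 0)
    (G : (Fin r → ℝ) → ℝ)
    (hG : G = fun y => (∑ i, g i (y i)) ^ n) :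
    (∀ s : Fin r → ℕ, ∑ i, s i < n →
        mixedPartialDeriv s G (fun _ => x) = 0) ∧
      (∀ s : Fin r → ℕ, ∑ i, s i = n →
        mixedPartialDeriv s G (fun _ => x)
          = (n.factorial : ℝ) * ∏ i, (deriv (g i) x) ^ (s i)) := by
  have hcd : ∀ i, ∃ u ∈ nhds x, ContDiffOn ℝ (n : ℕ∞) (g i) u := by
    intro i
    exact (hg i).contDiffOn le_rfl (fun h => absurd h (by simp))
  choose u hu hcdu using hcd
  set U : Set ℝ := interior (⋂ i, u i) with hUdef
  have hUo : IsOpen U := isOpen_interior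
  have hxU : x ∈ U := by
    rw [hUdef, mem_interior_iff_mem_nhds]
    exact Filter.iInter_mem.2 hu
  have hgU : ∀ i, ContDiffOn ℝ (n : ℕ∞) (g i) U := fun i =>
    (hcdu i).mono (interior_subset.trans (Set.iInter_subset u i))
  have hdiag : (fun _ : Fin r => x) ∈ cube U := fun _ => hxU
  have key : ∀ s : Fin r → ℕ, ∑ i, s i ≤ n →
      mixedPartialDeriv s G (fun _ => x)
        = (n.descFactorial (∑ l, s l) : ℝ) * (0 : ℝ) ^ (n - ∑ l, s l)
          * ∏ l, (deriv (g l) x) ^ (s l) := by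
    intro s hs
    have hfold := foldP hUo hgU hG s hs (List.finRange r) (List.nodup_finRange r)
    have hidx : (fun j => if j ∈ List.finRange r then s j else 0) = s := by
      funext j; simp [List.mem_finRange]
    rw [hidx] at hfold
    obtain ⟨H', hN, hEq⟩ := hfold
    have h1 : mixedPartialDeriv s G (fun _ => x)
        = mainFun n g s (fun _ => x) + H' (fun _ => x) := hEq _ hdiag
    rw [h1, Nice.eval_zero hN hsum, mainFun, hsum, add_zero]
  constructor
  · intro s hs
    rw [key s (le_of_lt hs), zero_pow (by omega : n - ∑ l, s l ≠ 0)]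
    ring
  · intro s hs
    rw [key s (le_of_eq hs), hs, Nat.sub_self, pow_zero, Nat.descFactorial_self]
    ring
end

section
/- Let n ∈ ℕ and let f, g be real-valued functions on ℝ, each n times differentiable. Then for every integer p with 0 ≤ p ≤ n, Σ_{k=0}^{n} (-1)^k · C(n,k) · (g^k)^{(p)} · (f · g^{n-k})^{(n-p)} = (-1)^p · n! · f · (g')^n, where C(n,k) is the binomial coefficient and h^{(m)} denotes the m-th derivative of h. -/
open scoped BigOperators

private lemma itd_add' {m : ℕ} {f g : ℝ → ℝ} (hf : ContDiff ℝ (m:ℕ∞) f)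
    (hg : ContDiff ℝ (m:ℕ∞) g) (x : ℝ) :
    iteratedDeriv m (fun t => f t + g t) x = iteratedDeriv m f x + iteratedDeriv m g x := by
  simp only [← iteratedDerivWithin_univ]
  exact iteratedDerivWithin_add (Set.mem_univ x) uniqueDiffOn_univ
    hf.contDiffWithinAt hg.contDiffWithinAt

private lemma itd_cmul' {m : ℕ} {f : ℝ → ℝ} (hf : ContDiff ℝ (m:ℕ∞) f) (c x : ℝ) :
    iteratedDeriv m (fun t => c * f t) x = c * iteratedDeriv m f x := by
  simp only [← iteratedDerivWithin_univ]
  exact iteratedDerivWithin_const_mul (Set.mem_univ x) uniqueDiffOn_univ c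
    hf.contDiffWithinAt

private lemma itd_zero (m : ℕ) (x : ℝ) :
    iteratedDeriv m (fun _ : ℝ => (0:ℝ)) x = 0 := by
  induction m generalizing x with
  | zero => simp
  | succ m ih =>
    rw [iteratedDeriv_succ']
    simp only [deriv_const']
    exact ih x

private lemma itd_sum {m : ℕ} {ι : Type*} (s : Finset ι) (F : ι → ℝ → ℝ) (x : ℝ)
    (h : ∀ i ∈ s, ContDiff ℝ (m:ℕ∞) (F i)) :
    iteratedDeriv m (fun t => ∑ i ∈ s, F i t) x = ∑ i ∈ s, iteratedDeriv m (F i) x := by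
  classical
  induction s using Finset.cons_induction with
  | empty => simpa using itd_zero m x
  | cons a s ha ih =>
    simp only [Finset.sum_cons]
    rw [itd_add' (h a (Finset.mem_cons_self a s))
      (ContDiff.sum fun i hi => h i (Finset.mem_cons_of_mem hi)) x,
      ih fun i hi => h i (Finset.mem_cons_of_mem hi)]

private lemma cd_deriv {m : ℕ} {h : ℝ → ℝ} (hh : ContDiff ℝ ((m+1 : ℕ):ℕ∞) h) :
    ContDiff ℝ (m:ℕ∞) (deriv h) := by
  have hh' : ContDiff ℝ ((m:ℕ∞)+1) h := by exact_mod_cast hh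
  exact (contDiff_succ_iff_deriv.mp hh').2.2

private lemma cd_diff {m : ℕ} {h : ℝ → ℝ} (hh : ContDiff ℝ ((m+1 : ℕ):ℕ∞) h) :
    Differentiable ℝ h := by
  have hh' : ContDiff ℝ ((m:ℕ∞)+1) h := by exact_mod_cast hh
  exact (contDiff_succ_iff_deriv.mp hh').1

private lemma cd_of_succ {m : ℕ} {h : ℝ → ℝ} (hh : ContDiff ℝ ((m+1 : ℕ):ℕ∞) h) :
    ContDiff ℝ (m:ℕ∞) h :=
  hh.of_le (by exact_mod_cast Nat.cast_le.mpr (Nat.le_succ m))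

private lemma itd_vanish (x : ℝ) : ∀ (m r : ℕ) (h u : ℝ → ℝ),
    ContDiff ℝ (m:ℕ∞) h → ContDiff ℝ (m:ℕ∞) u → u x = 0 → m < r →
    iteratedDeriv m (fun t => h t * u t ^ r) x = 0 := by
  intro m
  induction m with
  | zero =>
    intro r h u _ _ hux hr
    obtain ⟨r, rfl⟩ : ∃ s, r = s + 1 := ⟨r - 1, by omega⟩
    simp [iteratedDeriv_zero, hux]
  | succ m ih =>
    intro r h u hh hu hux hr
    have hdh : ContDiff ℝ (m:ℕ∞) (deriv h) := cd_deriv hh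
    have hdu : ContDiff ℝ (m:ℕ∞) (deriv u) := cd_deriv hu
    have hh' : ContDiff ℝ (m:ℕ∞) h := cd_of_succ hh
    have hu' : ContDiff ℝ (m:ℕ∞) u := cd_of_succ hu
    rw [iteratedDeriv_succ']
    have hd : deriv (fun t => h t * u t ^ r) = fun t =>
        deriv h t * u t ^ r + (r : ℝ) * ((h t * deriv u t) * u t ^ (r-1)) := by
      funext t
      rw [deriv_fun_mul (cd_diff hh t) ((cd_diff hu t).fun_pow r), deriv_fun_pow (cd_diff hu t) r]
      ring
    rw [hd, itd_add' (hdh.mul (hu'.pow r))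
      (contDiff_const.mul ((hh'.mul hdu).mul (hu'.pow (r-1)))) x,
      itd_cmul' ((hh'.mul hdu).mul (hu'.pow (r-1))) _ x,
      ih r (deriv h) u hdh hu' hux (by omega),
      ih (r-1) (fun t => h t * deriv u t) u (hh'.mul hdu) hu' hux (by omega)]
    ring

private lemma itd_top (x : ℝ) : ∀ (m : ℕ) (h u : ℝ → ℝ),
    ContDiff ℝ (m:ℕ∞) h → ContDiff ℝ (m:ℕ∞) u → u x = 0 →
    iteratedDeriv m (fun t => h t * u t ^ m) x
      = (m.factorial : ℝ) * h x * (deriv u x) ^ m := by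
  intro m
  induction m with
  | zero => intro h u _ _ _; simp [iteratedDeriv_zero]
  | succ m ih =>
    intro h u hh hu hux
    have hdh : ContDiff ℝ (m:ℕ∞) (deriv h) := cd_deriv hh
    have hdu : ContDiff ℝ (m:ℕ∞) (deriv u) := cd_deriv hu
    have hh' : ContDiff ℝ (m:ℕ∞) h := cd_of_succ hh
    have hu' : ContDiff ℝ (m:ℕ∞) u := cd_of_succ hu
    rw [iteratedDeriv_succ']
    have hd : deriv (fun t => h t * u t ^ (m+1)) = fun t =>
        deriv h t * u t ^ (m+1) + ((m:ℝ)+1) * ((h t * deriv u t) * u t ^ m) := by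
      funext t
      rw [deriv_fun_mul (cd_diff hh t) ((cd_diff hu t).fun_pow (m+1)),
        deriv_fun_pow (cd_diff hu t) (m+1)]
      push_cast
      ring
    rw [hd, itd_add' (hdh.mul (hu'.pow (m+1)))
      (contDiff_const.mul ((hh'.mul hdu).mul (hu'.pow m))) x,
      itd_cmul' ((hh'.mul hdu).mul (hu'.pow m)) _ x,
      itd_vanish x m (m+1) (deriv h) u hdh hu' hux (by omega),
      ih (fun t => h t * deriv u t) u (hh'.mul hdu) hu' hux]
    simp [Nat.factorial_succ]
    ring

theorem stmt_14 (n : ℕ) (f g : ℝ → ℝ)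
    (hf : ContDiff ℝ (n : ℕ∞) f) (hg : ContDiff ℝ (n : ℕ∞) g)
    (p : ℕ) (hp : p ≤ n) (x : ℝ) :
    ∑ k ∈ Finset.range (n + 1),
      (-1 : ℝ) ^ k * (n.choose k : ℝ) *
        iteratedDeriv p (fun t => (g t) ^ k) x *
        iteratedDeriv (n - p) (fun t => f t * (g t) ^ (n - k)) x
      = (-1 : ℝ) ^ p * (n.factorial : ℝ) * f x * (deriv g x) ^ n := by
  set a : ℝ := g x with ha
  have hfnp : ContDiff ℝ ((n-p : ℕ):ℕ∞) f := hf.of_le (by exact_mod_cast Nat.sub_le n p)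
  have hgnp : ContDiff ℝ ((n-p : ℕ):ℕ∞) g := hg.of_le (by exact_mod_cast Nat.sub_le n p)
  have hgp : ContDiff ℝ ((p : ℕ):ℕ∞) g := hg.of_le (by exact_mod_cast hp)
  have hunp : ContDiff ℝ ((n-p : ℕ):ℕ∞) (fun t => g t - a) := hgnp.sub contDiff_const
  have hup : ContDiff ℝ ((p : ℕ):ℕ∞) (fun t => g t - a) := hgp.sub contDiff_const
  have hux : (fun t => g t - a) x = 0 := by simp [ha]
  set c : ℕ → ℝ := fun k => iteratedDeriv (n - p) (fun t => f t * g t ^ (n - k)) x with hc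
  set α : ℕ → ℝ := fun k => (-1:ℝ)^k * (n.choose k : ℝ) * c k with hα
  set β : ℕ → ℝ := fun q =>
    ∑ k ∈ Finset.range (n+1), α k * (k.choose q : ℝ) * a ^ (k - q) with hβ
  set w : ℕ → ℝ := fun q =>
    iteratedDeriv (n - p) (fun t => f t * (g t - a) ^ (n - q)) x with hw
  -- w as a combination of the c's
  have hwq : ∀ q, q ≤ n → w q = ∑ j ∈ Finset.range (n - q + 1),
      (((n-q).choose j : ℝ) * (-a)^(n-q-j)) * c (n - j) := by
    intro q hq
    have hfun : (fun t => f t * (g t - a) ^ (n - q)) =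
        fun t => ∑ j ∈ Finset.range (n - q + 1),
          ((((n-q).choose j : ℝ)) * (-a)^(n-q-j)) * (f t * g t ^ j) := by
      funext t
      rw [show g t - a = g t + (-a) by ring, add_pow, Finset.mul_sum]
      exact Finset.sum_congr rfl fun j hj => by ring
    simp only [hw]
    rw [hfun, itd_sum _ _ x (fun j hj =>
      contDiff_const.mul (hfnp.mul (hgnp.pow j)))]
    refine Finset.sum_congr rfl fun j hj => ?_
    rw [itd_cmul' (hfnp.mul (hgnp.pow j)) _ x]
    simp only [Finset.mem_range] at hj
    simp only [hc]
    rw [show n - (n - j) = j from by omega]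
  -- β in terms of w
  have hβw : ∀ q, q ≤ n → β q = (-1:ℝ)^q * (n.choose q : ℝ) * w q := by
    intro q hq
    have h1 : β q = ∑ k ∈ Finset.Ico q (n+1), α k * (k.choose q : ℝ) * a ^ (k - q) := by
      rw [hβ]
      refine (Finset.sum_subset ?_ ?_).symm
      · intro k hk
        simp only [Finset.mem_Ico] at hk
        simp only [Finset.mem_range]
        omega
      · intro k hk hk'
        simp only [Finset.mem_range] at hk
        simp only [Finset.mem_Ico] at hk'
        have : k < q := by omega
        simp [Nat.choose_eq_zero_of_lt this]
    rw [h1, Finset.sum_Ico_eq_sum_range, hwq q hq,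
      ← Finset.sum_range_reflect
        (fun j => (((n-q).choose j : ℝ) * (-a)^(n-q-j)) * c (n - j)) (n-q+1),
      Finset.mul_sum]
    refine Finset.sum_congr (by congr 1; omega) fun d hd => ?_
    simp only [Finset.mem_range] at hd
    have hd' : d ≤ n - q := by omega
    rw [Nat.add_sub_cancel]
    have e2 : n - q - (n - q - d) = d := by omega
    have e3 : n - (n - q - d) = q + d := by omega
    have e4 : q + d - q = d := by omega
    rw [e2, e3, e4]
    have hcc : (n.choose (q+d)) * ((q+d).choose q) = n.choose q * ((n-q).choose (n-q-d)) := by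
      rw [Nat.choose_mul (Nat.le_add_right q d), e4,
        ← Nat.choose_symm hd']
    have hccR : ((n.choose (q+d)) : ℝ) * (((q+d).choose q) : ℝ)
        = (n.choose q : ℝ) * (((n-q).choose (n-q-d)) : ℝ) := by exact_mod_cast hcc
    rw [hα]
    simp only []
    rw [show ((-1:ℝ))^(q+d) = (-1:ℝ)^q * (-1:ℝ)^d from pow_add _ q d,
      show (-a)^d = (-1:ℝ)^d * a^d by rw [neg_pow]]
    linear_combination ((-1:ℝ))^q * ((-1:ℝ))^d * a^d * c (q+d) * hccR
  -- vanishing of w below p, value at p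
  have hw0 : ∀ q, q < p → w q = 0 := fun q hq =>
    itd_vanish x (n-p) (n-q) f (fun t => g t - a) hfnp hunp hux (by omega)
  have hwp : w p = (((n-p).factorial : ℝ)) * f x * (deriv g x)^(n-p) := by
    have h2 := itd_top x (n-p) f (fun t => g t - a) hfnp hunp hux
    simp only [hw]
    rw [h2, deriv_sub_const]
  -- main rewriting of the LHS
  have step1 : ∑ k ∈ Finset.range (n + 1),
      (-1 : ℝ) ^ k * (n.choose k : ℝ) *
        iteratedDeriv p (fun t => (g t) ^ k) x *
        iteratedDeriv (n - p) (fun t => f t * (g t) ^ (n - k)) x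
      = iteratedDeriv p (fun s => ∑ k ∈ Finset.range (n+1), α k * g s ^ k) x := by
    rw [itd_sum _ _ x (fun k hk => contDiff_const.mul (hgp.pow k))]
    refine Finset.sum_congr rfl fun k hk => ?_
    rw [itd_cmul' (hgp.pow k) _ x, hα, hc]
    ring
  have step2 : ∀ s : ℝ, ∑ k ∈ Finset.range (n+1), α k * g s ^ k
      = ∑ q ∈ Finset.range (n+1), β q * (g s - a) ^ q := by
    intro s
    rw [hβ]
    simp only [Finset.sum_mul]
    rw [Finset.sum_comm]
    refine Finset.sum_congr rfl fun k hk => ?_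
    simp only [Finset.mem_range] at hk
    have h3 : ∀ q ∈ Finset.range (n+1),
        α k * (k.choose q : ℝ) * a ^ (k - q) * (g s - a) ^ q
        = α k * ((g s - a) ^ q * a ^ (k-q) * (k.choose q : ℝ)) := fun q hq => by ring
    rw [Finset.sum_congr rfl h3, ← Finset.mul_sum]
    have h4 : ∑ q ∈ Finset.range (n+1), (g s - a) ^ q * a ^ (k-q) * (k.choose q : ℝ)
        = ∑ q ∈ Finset.range (k+1), (g s - a) ^ q * a ^ (k-q) * (k.choose q : ℝ) := by
      refine (Finset.sum_subset ?_ ?_).symm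
      · exact Finset.range_subset_range.mpr (by omega)
      · intro q hq hq'
        simp only [Finset.mem_range] at hq hq'
        simp [Nat.choose_eq_zero_of_lt (by omega : k < q)]
    rw [h4, ← add_pow, sub_add_cancel]
  have step3 : iteratedDeriv p (fun s => ∑ q ∈ Finset.range (n+1), β q * (g s - a) ^ q) x
      = ∑ q ∈ Finset.range (n+1), β q * iteratedDeriv p (fun t => (g t - a) ^ q) x := by
    rw [itd_sum _ _ x (fun q hq => contDiff_const.mul (hup.pow q))]
    exact Finset.sum_congr rfl fun q hq => itd_cmul' (hup.pow q) _ x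
  have step4 : ∑ q ∈ Finset.range (n+1), β q * iteratedDeriv p (fun t => (g t - a) ^ q) x
      = β p * iteratedDeriv p (fun t => (g t - a) ^ p) x := by
    refine Finset.sum_eq_single_of_mem p (Finset.mem_range.mpr (by omega)) ?_
    intro q hq hqp
    simp only [Finset.mem_range] at hq
    rcases lt_or_gt_of_ne hqp with h | h
    · rw [hβw q (by omega), hw0 q h]
      ring
    · have h5 : (fun t => (g t - a) ^ q) = (fun t => (1:ℝ) * (g t - a) ^ q) := by
        funext t; ring
      rw [h5, itd_vanish x p q (fun _ => (1:ℝ)) (fun t => g t - a)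
        contDiff_const hup hux h]
      ring
  have step5 : iteratedDeriv p (fun t => (g t - a) ^ p) x
      = (p.factorial : ℝ) * (deriv g x) ^ p := by
    have h6 : (fun t => (g t - a) ^ p) = (fun t => (1:ℝ) * (g t - a) ^ p) := by
      funext t; ring
    rw [h6, itd_top x p (fun _ => (1:ℝ)) (fun t => g t - a) contDiff_const hup hux,
      deriv_sub_const]
    ring
  rw [step1]
  have hfx : (fun s => ∑ k ∈ Finset.range (n+1), α k * g s ^ k)
      = (fun s => ∑ q ∈ Finset.range (n+1), β q * (g s - a) ^ q) := funext step2
  rw [hfx, step3, step4, step5, hβw p hp, hwp]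
  have hfact : ((n.choose p : ℕ) : ℝ) * (p.factorial : ℝ) * ((n-p).factorial : ℝ)
      = (n.factorial : ℝ) := by
    exact_mod_cast Nat.choose_mul_factorial_mul_factorial hp
  have hpow : (deriv g x)^(n-p) * (deriv g x)^p = (deriv g x)^n := by
    rw [← pow_add, Nat.sub_add_cancel hp]
  rw [← hfact, ← hpow]
  ring
end
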